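/- If C : ℝ → ℝ is even, continuous and absolutely integrable with ∫_ℝ C(τ) dτ = I, then lim_{T→∞} (1/T) ∫₀ᵀ∫₀ᵀ C(t-s) dt ds = I. -/

import Mathlib

open MeasureTheory Filter

/-- Cesàro averaging for continuous functions: if `f → L` at infinity, then the
averages `(1/T) ∫₀ᵀ f` also tend to `L`. -/
lemma cesaro_integral {f : ℝ → ℝ} (hf : Continuous f) {L : ℝ}
    (h : Tendsto f atTop (nhds L)) :
    Tendsto (fun T : ℝ => (1 / T) * ∫ x in (0:ℝ)..T, f x) atTop (nhds L) := by
  rw [Metric.tendsto_atTop]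
  intro ε hε
  obtain ⟨M, hM⟩ := (Metric.tendsto_atTop.1 h) (ε / 4) (by positivity)
  set M' : ℝ := max M 0 with hM'def
  have hM'0 : 0 ≤ M' := le_max_right _ _
  set K : ℝ := |∫ x in (0:ℝ)..M', (f x - L)| with hKdef
  have hK0 : 0 ≤ K := abs_nonneg _
  refine ⟨max (M' + 1) (4 * K / ε + 1), fun T hT => ?_⟩
  have hT1 : M' + 1 ≤ T := le_trans (le_max_left _ _) hT
  have hT2 : 4 * K / ε + 1 ≤ T := le_trans (le_max_right _ _) hT
  have hTpos : 0 < T := lt_of_lt_of_le (by positivity) hT1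
  have hM'T : M' ≤ T := by linarith
  have hint1 : IntervalIntegrable (fun x => f x - L) volume 0 M' :=
    ((hf.sub continuous_const).intervalIntegrable _ _)
  have hint2 : IntervalIntegrable (fun x => f x - L) volume M' T :=
    ((hf.sub continuous_const).intervalIntegrable _ _)
  have key : (1 / T) * (∫ x in (0:ℝ)..T, f x) - L
      = (1 / T) * ∫ x in (0:ℝ)..T, (f x - L) := by
    rw [intervalIntegral.integral_sub (hf.intervalIntegrable _ _)
      (intervalIntegrable_const), intervalIntegral.integral_const]
    field_simp
    simp
  have hsplit : (∫ x in (0:ℝ)..T, (f x - L))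
      = (∫ x in (0:ℝ)..M', (f x - L)) + ∫ x in M'..T, (f x - L) :=
    (intervalIntegral.integral_add_adjacent_intervals hint1 hint2).symm
  have hb2 : |∫ x in M'..T, (f x - L)| ≤ ε / 4 * |T - M'| := by
    have h' : ∀ x ∈ Set.uIoc M' T, ‖f x - L‖ ≤ ε / 4 := by
      intro x hx
      rw [Set.uIoc_of_le hM'T] at hx
      have hxM : M ≤ x := le_trans (le_max_left _ _) (le_of_lt hx.1)
      have := hM x hxM
      rw [Real.dist_eq] at this
      simpa [Real.norm_eq_abs] using le_of_lt this
    simpa [Real.norm_eq_abs] using intervalIntegral.norm_integral_le_of_norm_le_const h'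
  have habs : |∫ x in (0:ℝ)..T, (f x - L)| ≤ K + ε / 4 * (T - M') := by
    rw [hsplit]
    calc |(∫ x in (0:ℝ)..M', (f x - L)) + ∫ x in M'..T, (f x - L)|
        ≤ |∫ x in (0:ℝ)..M', (f x - L)| + |∫ x in M'..T, (f x - L)| := abs_add_le _ _
      _ ≤ K + ε / 4 * |T - M'| := add_le_add le_rfl hb2
      _ = K + ε / 4 * (T - M') := by rw [abs_of_nonneg (by linarith)]
  have hKT : K < T * ε / 4 := by
    have : 4 * K / ε < T := by linarith
    rw [div_lt_iff₀ hε] at this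
    linarith
  rw [Real.dist_eq, key, abs_mul, abs_of_pos (by positivity : (0:ℝ) < 1 / T)]
  have hbound : (1 / T) * |∫ x in (0:ℝ)..T, (f x - L)|
      ≤ (1 / T) * (K + ε / 4 * (T - M')) := by gcongr
  refine lt_of_le_of_lt hbound ?_
  rw [one_div, inv_mul_lt_iff₀ hTpos]
  nlinarith [mul_pos hTpos hε]

/-- Short-memory asymptotics: if `C : ℝ → ℝ` is even, continuous and absolutely integrable
with `∫_ℝ C(τ) dτ = I`, then `(1/T) ∫₀ᵀ∫₀ᵀ C(t-s) dt ds → I` as `T → ∞`. -/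
theorem stmt10 (C : ℝ → ℝ) (hC : Continuous C) (heven : ∀ τ : ℝ, C (-τ) = C τ)
    (hint : Integrable C) (I : ℝ) (hI : (∫ τ : ℝ, C τ) = I) :
    Tendsto (fun T : ℝ => (1 / T) * ∫ t in (0:ℝ)..T, ∫ s in (0:ℝ)..T, C (t - s))
      atTop (nhds I) := by
  set F : ℝ → ℝ := fun x => ∫ u in (0:ℝ)..x, C u with hFdef
  have hFcont : Continuous F :=
    intervalIntegral.continuous_primitive (fun a b => hC.intervalIntegrable a b) 0
  have hGcont : Continuous (fun x => F (-x)) := hFcont.comp continuous_neg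
  -- Rewrite the double integral
  have hrewrite : ∀ T : ℝ, (1 / T) * (∫ t in (0:ℝ)..T, ∫ s in (0:ℝ)..T, C (t - s))
      = (1 / T) * (∫ t in (0:ℝ)..T, F t) - (1 / T) * (∫ t in (0:ℝ)..T, F (-t)) := by
    intro T
    have inner : ∀ t : ℝ, (∫ s in (0:ℝ)..T, C (t - s)) = F t - F (t - T) := by
      intro t
      rw [intervalIntegral.integral_comp_sub_left C t]
      simp only [sub_zero]
      exact (intervalIntegral.integral_interval_sub_left
        (hC.intervalIntegrable 0 t) (hC.intervalIntegrable 0 (t - T))).symm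
    have h1 : (∫ t in (0:ℝ)..T, ∫ s in (0:ℝ)..T, C (t - s))
        = ∫ t in (0:ℝ)..T, (F t - F (t - T)) := by
      congr 1; ext t; exact inner t
    have hintF' : IntervalIntegrable (fun t => F (t - T)) volume 0 T :=
      (hFcont.comp (continuous_sub_right T)).intervalIntegrable _ _
    rw [h1, intervalIntegral.integral_sub (hFcont.intervalIntegrable _ _) hintF']
    have h2 : (∫ t in (0:ℝ)..T, F (t - T)) = ∫ t in (0:ℝ)..T, F (-t) := by
      rw [intervalIntegral.integral_comp_sub_right F T, intervalIntegral.integral_comp_neg F]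
      norm_num
    rw [h2, mul_sub]
  have hL1 : Tendsto F atTop (nhds (∫ x in Set.Ioi (0:ℝ), C x)) :=
    intervalIntegral_tendsto_integral_Ioi 0 hint.integrableOn tendsto_id
  have hL2 : Tendsto (fun x => F (-x)) atTop (nhds (-(∫ x in Set.Iic (0:ℝ), C x))) := by
    have h := intervalIntegral_tendsto_integral_Iic 0 hint.integrableOn
      (tendsto_neg_atTop_atBot : Tendsto (fun x : ℝ => -x) atTop atBot)
    have heq : ∀ x : ℝ, F (-x) = -∫ u in (-x)..(0:ℝ), C u := by
      intro x
      rw [hFdef]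
      exact (intervalIntegral.integral_symm _ _)
    simpa only [heq] using h.neg
  have hcesaro1 := cesaro_integral hFcont hL1
  have hcesaro2 := cesaro_integral hGcont hL2
  have hfinal := hcesaro1.sub hcesaro2
  have hIeq : (∫ x in Set.Ioi (0:ℝ), C x) - -(∫ x in Set.Iic (0:ℝ), C x) = I := by
    rw [sub_neg_eq_add, add_comm, intervalIntegral.integral_Iic_add_Ioi hint.integrableOn hint.integrableOn, hI]
  rw [hIeq] at hfinal
  exact hfinal.congr (fun T => (hrewrite T).symm)
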